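/- Every ρ-invariant monomial y₁^{n₁} ⋯ y_{d−1}^{n_{d−1}} (i.e., with ∑ k·n_k ≡ 0 mod d) of degree ∑ n_k > d can be written as a product of two ρ-invariant monomials of strictly smaller positive degree. Consequently the submonoid of invariant monomials is generated by the invariant monomials of degree at most d. -/
import Mathlib

private lemma aux_sum_count {d : ℕ} (f : Fin d → ℕ) (l : List (Fin d)) :
    ∑ k : Fin d, f k * l.count k = (l.map f).sum := by
  induction l with
  | nil => simp
  | cons a t ih =>
    simp only [List.count_cons, List.map_cons, List.sum_cons, beq_iff_eq,
      mul_add, mul_ite, mul_one, mul_zero, Finset.sum_add_distrib, ih]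
    rw [Finset.sum_ite_eq Finset.univ a f]
    simp [add_comm]

private lemma key_split (d : ℕ) (hd : 2 ≤ d) (n : Fin d → ℕ)
    (hdvd : d ∣ ∑ k : Fin d, (k : ℕ) * n k) (hdeg : d < ∑ k : Fin d, n k) :
    ∃ n' n'' : Fin d → ℕ, n = n' + n'' ∧
      (d ∣ ∑ k : Fin d, (k : ℕ) * n' k) ∧ (d ∣ ∑ k : Fin d, (k : ℕ) * n'' k) ∧
      0 < ∑ k : Fin d, n' k ∧ (∑ k : Fin d, n' k ≤ d) ∧ 0 < ∑ k : Fin d, n'' k := by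
  haveI : NeZero d := ⟨by omega⟩
  set L : List (Fin d) :=
    ((List.finRange d).map (fun j => List.replicate (n j) j)).flatten with hL
  have hcount : ∀ k : Fin d, L.count k = n k := by
    intro k
    rw [hL, List.count_flatten, List.map_map]
    rw [show (List.count k ∘ fun j => List.replicate (n j) j)
        = fun j : Fin d => if j = k then n j else 0 from by
      funext j; simp [List.count_replicate]]
    rw [← Fin.sum_univ_def]
    simp
  have hlen : L.length = ∑ k : Fin d, n k := by
    rw [hL, List.length_flatten, List.map_map]
    rw [show (List.length ∘ fun j => List.replicate (n j) j) = n from by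
      funext j; simp]
    rw [← Fin.sum_univ_def]
  -- pigeonhole on prefix sums mod d
  set g : ℕ → ZMod d := fun m => (((L.take m).map (Fin.val)).sum : ZMod d) with hg
  obtain ⟨x, hx, y, hy, hxy, hgxy⟩ :=
    Finset.exists_ne_map_eq_of_card_lt_of_maps_to
      (s := Finset.range (d + 1)) (t := (Finset.univ : Finset (ZMod d)))
      (by simp) (fun a _ => Finset.mem_univ (g a))
  -- wlog x < y
  obtain ⟨i, j, hij, hi, hj, hgij⟩ : ∃ i j, i < j ∧ i < d + 1 ∧ j < d + 1 ∧ g i = g j := by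
    rcases Nat.lt_or_ge x y with h | h
    · exact ⟨x, y, h, Finset.mem_range.mp hx, Finset.mem_range.mp hy, hgxy⟩
    · exact ⟨y, x, by omega, Finset.mem_range.mp hy, Finset.mem_range.mp hx, hgxy.symm⟩
  set L' : List (Fin d) := (L.take j).drop i with hL'
  have hsplit : L.take i ++ L' = L.take j := by
    have hm : i ⊓ j = i := by omega
    have h1 := List.take_append_drop i (L.take j)
    rw [List.take_take, hm] at h1
    exact h1
  have hsum0 : ((((L'.map Fin.val)).sum : ℕ) : ZMod d) = 0 := by
    have := congrArg (fun l : List (Fin d) => ((l.map Fin.val).sum : ZMod d)) hsplit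
    simp only [List.map_append, List.sum_append, Nat.cast_add] at this
    have h2 : g i + ((((L'.map Fin.val)).sum : ℕ) : ZMod d) = g j := this
    rw [← hgij] at h2
    exact add_left_cancel (h2.trans (add_zero (g i)).symm)
  have hjlen : j ≤ L.length := by omega
  have hlen' : L'.length = j - i := by
    rw [hL', List.length_drop, List.length_take]
    omega
  have hsub : L'.Sublist L :=
    (List.drop_sublist i (L.take j)).trans (List.take_sublist j L)
  refine ⟨fun k => L'.count k, fun k => n k - L'.count k, ?_, ?_, ?_, ?_, ?_, ?_⟩
  · funext k
    have := (hsub.count_le k)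
    rw [hcount k] at this
    simp only [Pi.add_apply]
    omega
  · rw [aux_sum_count]
    exact (ZMod.natCast_eq_zero_iff _ d).mp hsum0
  · have hdvd' : d ∣ ∑ k : Fin d, (k : ℕ) * L'.count k := by
      rw [aux_sum_count]
      exact (ZMod.natCast_eq_zero_iff _ d).mp hsum0
    have heq : ∑ k : Fin d, (k : ℕ) * n k
        = ∑ k : Fin d, (k : ℕ) * L'.count k + ∑ k : Fin d, (k : ℕ) * (n k - L'.count k) := by
      rw [← Finset.sum_add_distrib]
      refine Finset.sum_congr rfl fun k _ => ?_
      have := (hsub.count_le k); rw [hcount k] at this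
      rw [← Nat.mul_add]
      congr 1
      omega
    rw [heq] at hdvd
    exact (Nat.dvd_add_right hdvd').mp hdvd
  · have : ∑ k : Fin d, (1 : ℕ) * L'.count k = (L'.map fun _ => 1).sum := aux_sum_count _ _
    simp only [one_mul] at this
    rw [this]
    simp only [List.map_const', List.sum_replicate, smul_eq_mul, mul_one]
    omega
  · have : ∑ k : Fin d, (1 : ℕ) * L'.count k = (L'.map fun _ => 1).sum := aux_sum_count _ _
    simp only [one_mul] at this
    rw [this]
    simp only [List.map_const', List.sum_replicate, smul_eq_mul, mul_one]
    omega
  · have hd' : ∑ k : Fin d, L'.count k ≤ d := by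
      have : ∑ k : Fin d, (1 : ℕ) * L'.count k = (L'.map fun _ => 1).sum := aux_sum_count _ _
      simp only [one_mul] at this
      rw [this]
      simp only [List.map_const', List.sum_replicate, smul_eq_mul, mul_one]
      omega
    have hsum : ∑ k : Fin d, (n k - L'.count k)
        = ∑ k : Fin d, n k - ∑ k : Fin d, L'.count k := by
      refine (Nat.sub_eq_of_eq_add ?_).symm
      rw [← Finset.sum_add_distrib]
      refine Finset.sum_congr rfl fun k _ => ?_
      have := (hsub.count_le k); rw [hcount k] at this
      omega
    show 0 < ∑ k : Fin d, (n k - L'.count k)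
    omega

/-- Every invariant exponent vector `n` (i.e. with `d ∣ ∑ k·n k`) of total degree
`> d` splits as a sum of two invariant exponent vectors of positive degree; hence
the additive monoid of invariant exponent vectors is generated by those of
degree at most `d`. -/
theorem stmt_12 (d : ℕ) (hd : 2 ≤ d) :
    (∀ n : Fin d → ℕ, (d ∣ ∑ k : Fin d, (k : ℕ) * n k) → d < ∑ k : Fin d, n k →
      ∃ n' n'' : Fin d → ℕ, n = n' + n'' ∧
        (d ∣ ∑ k : Fin d, (k : ℕ) * n' k) ∧ (d ∣ ∑ k : Fin d, (k : ℕ) * n'' k) ∧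
        0 < ∑ k : Fin d, n' k ∧ 0 < ∑ k : Fin d, n'' k) ∧
    (∀ n : Fin d → ℕ, (d ∣ ∑ k : Fin d, (k : ℕ) * n k) →
      n ∈ AddSubmonoid.closure
        {m : Fin d → ℕ | (d ∣ ∑ k : Fin d, (k : ℕ) * m k) ∧ ∑ k : Fin d, m k ≤ d}) := by
  constructor
  · intro n hdvd hdeg
    obtain ⟨n', n'', h1, h2, h3, h4, _, h5⟩ := key_split d hd n hdvd hdeg
    exact ⟨n', n'', h1, h2, h3, h4, h5⟩
  · have main : ∀ N : ℕ, ∀ n : Fin d → ℕ, ∑ k : Fin d, n k ≤ N →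
        (d ∣ ∑ k : Fin d, (k : ℕ) * n k) →
        n ∈ AddSubmonoid.closure
          {m : Fin d → ℕ | (d ∣ ∑ k : Fin d, (k : ℕ) * m k) ∧ ∑ k : Fin d, m k ≤ d} := by
      intro N
      induction N with
      | zero =>
        intro n hN hdvd
        exact AddSubmonoid.subset_closure ⟨hdvd, by omega⟩
      | succ N ih =>
        intro n hN hdvd
        by_cases hle : ∑ k : Fin d, n k ≤ d
        · exact AddSubmonoid.subset_closure ⟨hdvd, hle⟩
        · obtain ⟨n', n'', h1, h2, h3, h4, _, h5⟩ :=
            key_split d hd n hdvd (by omega)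
          have hsum : ∑ k : Fin d, n k = ∑ k : Fin d, n' k + ∑ k : Fin d, n'' k := by
            rw [h1, ← Finset.sum_add_distrib]; rfl
          rw [h1]
          exact AddSubmonoid.add_mem _ (ih n' (by omega) h2) (ih n'' (by omega) h3)
    intro n hdvd
    exact main (∑ k : Fin d, n k) n le_rfl hdvd
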